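/- Let M be a triangulated compact connected 2-manifold (a simplicial complex) with every edge of weight 1, and let S be a proper embedded separating curve (surface). Then: (a) S is a stable minimal surface if and only if S has topological index 0; (b) S is an unstable minimal surface if and only if S has topological index 1. -/

import Mathlib

open Finset

/-- The edges of a triangle `T` (a 3-element vertex set): its 2-element subsets. -/
def edgesOfT {V : Type} [DecidableEq V] (T : Finset V) : Finset (Finset V) :=
  T.powersetCard 2

/-- The strength σ(T;S) of a triangle `T` relative to a curve `S`, with unit edge
weights: (#edges of T not in S) − (#edges of T in S). -/
def sigma2 {V : Type} [DecidableEq V] (S : Finset (Finset V)) (T : Finset V) : ℤ :=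
  ((edgesOfT T \ S).card : ℤ) - ((edgesOfT T ∩ S).card : ℤ)

/-- `T` is a shortening move for `S`: a triangle of `K` meeting `S` with σ(T;S) ≤ 0.
(In the unit-weight 2-dimensional setting every shortening move is strict.) -/
def IsShort2 {V : Type} [DecidableEq V] (K S : Finset (Finset V)) (T : Finset V) : Prop :=
  T ∈ K ∧ (edgesOfT T ∩ S).Nonempty ∧ sigma2 S T ≤ 0

/-- `S` is a stable minimal surface: it has no strict shortening moves. -/
def StableMS {V : Type} [DecidableEq V] (K S : Finset (Finset V)) : Prop :=
  ∀ T ∈ K, (edgesOfT T ∩ S).Nonempty → ¬ sigma2 S T < 0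

/-- `S` is an unstable minimal surface (Definition 2.8, unit weights): the triangles of
`K` partition into nonempty sets 𝒜, ℬ such that all edges common to triangles on
opposite sides lie in S, each side contains a shortening move (some side a strict one),
every strict shortening move on one side is balanced by a shortening move on the other
side with 2ω(∂A ⊓ ∂B) ≥ |σ(A;S)| + |σ(B;S)|, and this inequality holds for every pair of
strict shortening moves on opposite sides. -/
def UnstableMS {V : Type} [DecidableEq V] (K S : Finset (Finset V)) : Prop :=
  ∃ 𝒜 ℬ : Finset (Finset V), 𝒜.Nonempty ∧ ℬ.Nonempty ∧ 𝒜 ∩ ℬ = ∅ ∧ 𝒜 ∪ ℬ = K ∧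
    (∀ A ∈ 𝒜, ∀ B ∈ ℬ, edgesOfT A ∩ edgesOfT B ⊆ S) ∧
    (∃ A ∈ 𝒜, IsShort2 K S A) ∧ (∃ B ∈ ℬ, IsShort2 K S B) ∧
    ((∃ A ∈ 𝒜, IsShort2 K S A ∧ sigma2 S A < 0) ∨
     (∃ B ∈ ℬ, IsShort2 K S B ∧ sigma2 S B < 0)) ∧
    (∀ A ∈ 𝒜, IsShort2 K S A → sigma2 S A < 0 →
      ∃ B ∈ ℬ, IsShort2 K S B ∧
        2 * ((edgesOfT A ∩ edgesOfT B).card : ℤ) ≥ |sigma2 S A| + |sigma2 S B|) ∧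
    (∀ B ∈ ℬ, IsShort2 K S B → sigma2 S B < 0 →
      ∃ A ∈ 𝒜, IsShort2 K S A ∧
        2 * ((edgesOfT A ∩ edgesOfT B).card : ℤ) ≥ |sigma2 S A| + |sigma2 S B|) ∧
    (∀ A ∈ 𝒜, ∀ B ∈ ℬ, IsShort2 K S A → sigma2 S A < 0 → IsShort2 K S B →
      sigma2 S B < 0 →
        2 * ((edgesOfT A ∩ edgesOfT B).card : ℤ) ≥ |sigma2 S A| + |sigma2 S B|)

/-- The (1-skeleton of the) disc complex 𝒟 of `S`: vertices are the shortening moves for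
`S`, and two of them are adjacent iff they share no edge lying in S.  Since 𝒟 is the
flag complex on this graph, π₀(𝒟) is nontrivial iff this graph is not preconnected. -/
def discGraph {V : Type} [DecidableEq V] (K S : Finset (Finset V)) :
    SimpleGraph {T : Finset V // IsShort2 K S T} where
  Adj A B := A ≠ B ∧ ∀ e ∈ S, ¬ (e ⊆ A.val ∧ e ⊆ B.val)
  symm := by
    constructor
    rintro A B ⟨h1, h2⟩
    exact ⟨h1.symm, fun e he hc => h2 e he ⟨hc.2, hc.1⟩⟩
  loopless := by constructor; rintro A ⟨h1, -⟩; exact h1 rfl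

lemma bool2' : ∀ a b c : Bool, b ≠ c → a = b ∨ a = c := by decide

lemma bool3' : ∀ a b c : Bool, b ≠ c → a ≠ b → a = c := by decide

lemma mem_edges' {V : Type} [DecidableEq V] {T e : Finset V} :
    e ∈ edgesOfT T ↔ e ⊆ T ∧ e.card = 2 := Finset.mem_powersetCard

lemma edges_card' {V : Type} [DecidableEq V] {T : Finset V} (h : T.card = 3) :
    (edgesOfT T).card = 3 := by
  simp [edgesOfT, Finset.card_powersetCard, h]

lemma sigma_eq' {V : Type} [DecidableEq V] {T : Finset V} (S : Finset (Finset V))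
    (h : T.card = 3) : sigma2 S T = 3 - 2 * ((edgesOfT T ∩ S).card : ℤ) := by
  have h1 : (edgesOfT T \ S).card + (edgesOfT T ∩ S).card = 3 := by
    rw [Finset.card_sdiff_add_card_inter, edges_card' h]
  unfold sigma2
  omega

lemma short_strict' {V : Type} [DecidableEq V] {K S : Finset (Finset V)} {T : Finset V}
    (hpure : ∀ T ∈ K, T.card = 3) (h : IsShort2 K S T) :
    sigma2 S T < 0 ∧ 2 ≤ (edgesOfT T ∩ S).card := by
  have hc := hpure T h.1
  have se := sigma_eq' S hc
  have h2 := h.2.2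
  rw [se] at h2 ⊢
  omega

lemma common_edge' {V : Type} [DecidableEq V] {A B e : Finset V}
    (hA : A.card = 3) (hB : B.card = 3) (hne : A ≠ B)
    (he : e.card = 2) (heA : e ⊆ A) (heB : e ⊆ B) :
    e = A ∩ B ∧ (A ∩ B).card = 2 := by
  have hsub : e ⊆ A ∩ B := Finset.subset_inter heA heB
  have h2 : 2 ≤ (A ∩ B).card := he ▸ Finset.card_le_card hsub
  have h3 : (A ∩ B).card ≤ 3 :=
    le_trans (Finset.card_le_card Finset.inter_subset_left) (le_of_eq hA)
  have hne3 : (A ∩ B).card ≠ 3 := by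
    intro h
    have hAe : A ∩ B = A :=
      Finset.eq_of_subset_of_card_le Finset.inter_subset_left (by omega)
    have hBe : A ∩ B = B :=
      Finset.eq_of_subset_of_card_le Finset.inter_subset_right (by omega)
    exact hne (hAe.symm.trans hBe)
  have hcard : (A ∩ B).card = 2 := by omega
  exact ⟨Finset.eq_of_subset_of_card_le hsub (by omega), hcard⟩

/-- If all three edges of a triangle `T ∈ K` lie in `S`, and some shortening move `B`
shares the edge `T ∩ B ∈ S` with `T`, then some vertex lies in three edges of `S`,
contradicting embeddedness. -/
lemma no_sigma3' {V : Type} [DecidableEq V] {K S : Finset (Finset V)} {T B : Finset V}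
    (hpure : ∀ T ∈ K, T.card = 3)
    (hembed : ∀ v : V, (S.filter (fun e => v ∈ e)).card = 0 ∨
      (S.filter (fun e => v ∈ e)).card = 2)
    (hT : T ∈ K) (hTall : edgesOfT T ⊆ S)
    (hBm : IsShort2 K S B) (hne : T ≠ B)
    (heS : T ∩ B ∈ S) (hcard : (T ∩ B).card = 2) : False := by
  have hTc := hpure T hT
  have hBc := hpure B hBm.1
  set e := T ∩ B with he_def
  have heB : e ⊆ B := Finset.inter_subset_right
  have heT : e ⊆ T := Finset.inter_subset_left
  have heE : e ∈ edgesOfT B ∩ S :=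
    Finset.mem_inter.mpr ⟨mem_edges'.mpr ⟨heB, hcard⟩, heS⟩
  have hk := (short_strict' hpure hBm).2
  obtain ⟨f, hfmem, hfe⟩ := Finset.exists_mem_ne (lt_of_lt_of_le one_lt_two hk) e
  have hfB : f ⊆ B := (mem_edges'.mp (Finset.mem_inter.mp hfmem).1).1
  have hfc : f.card = 2 := (mem_edges'.mp (Finset.mem_inter.mp hfmem).1).2
  have hfS : f ∈ S := (Finset.mem_inter.mp hfmem).2
  have hfT : ¬ f ⊆ T := by
    intro h
    exact hfe (Finset.eq_of_subset_of_card_le (Finset.subset_inter h hfB) (by omega))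
  -- common vertex of e and f
  have hef : (e ∩ f).Nonempty := by
    rw [Finset.nonempty_iff_ne_empty]
    intro h
    have hd : Disjoint e f := Finset.disjoint_iff_inter_eq_empty.mpr h
    have h4 : (e ∪ f).card = 4 := by
      rw [Finset.card_union_of_disjoint hd, hcard, hfc]
    have hsub : e ∪ f ⊆ B := Finset.union_subset heB hfB
    have := Finset.card_le_card hsub
    omega
  obtain ⟨v, hv⟩ := hef
  have hve : v ∈ e := (Finset.mem_inter.mp hv).1
  have hvf : v ∈ f := (Finset.mem_inter.mp hv).2
  have hvT : v ∈ T := heT hve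
  -- the two edges of T at v
  have herc : (T.erase v).card = 2 := by rw [Finset.card_erase_of_mem hvT, hTc]
  obtain ⟨a, b, hab, herase⟩ := Finset.card_eq_two.mp herc
  have haE : a ∈ T.erase v := by rw [herase]; simp
  have hbE : b ∈ T.erase v := by rw [herase]; simp
  have haT : a ∈ T := Finset.mem_of_mem_erase haE
  have hbT : b ∈ T := Finset.mem_of_mem_erase hbE
  have hav : a ≠ v := Finset.ne_of_mem_erase haE
  have hbv : b ≠ v := Finset.ne_of_mem_erase hbE
  have he1T : ({v, a} : Finset V) ⊆ T := by
    intro x hx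
    simp only [Finset.mem_insert, Finset.mem_singleton] at hx
    rcases hx with rfl | rfl
    · exact hvT
    · exact haT
  have he2T : ({v, b} : Finset V) ⊆ T := by
    intro x hx
    simp only [Finset.mem_insert, Finset.mem_singleton] at hx
    rcases hx with rfl | rfl
    · exact hvT
    · exact hbT
  have he1c : ({v, a} : Finset V).card = 2 := Finset.card_pair (Ne.symm hav)
  have he2c : ({v, b} : Finset V).card = 2 := Finset.card_pair (Ne.symm hbv)
  have he1S : ({v, a} : Finset V) ∈ S := hTall (mem_edges'.mpr ⟨he1T, he1c⟩)
  have he2S : ({v, b} : Finset V) ∈ S := hTall (mem_edges'.mpr ⟨he2T, he2c⟩)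
  have h12 : ({v, a} : Finset V) ≠ {v, b} := by
    intro h
    have : a ∈ ({v, b} : Finset V) := h ▸ (by simp)
    simp only [Finset.mem_insert, Finset.mem_singleton] at this
    rcases this with h' | h'
    · exact hav h'
    · exact hab h'
  have h1f : ({v, a} : Finset V) ≠ f := fun h => hfT (h ▸ he1T)
  have h2f : ({v, b} : Finset V) ≠ f := fun h => hfT (h ▸ he2T)
  have hsub3 : ({({v, a} : Finset V), {v, b}, f} : Finset (Finset V)) ⊆
      S.filter (fun e => v ∈ e) := by
    intro x hx
    simp only [Finset.mem_insert, Finset.mem_singleton] at hx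
    rcases hx with rfl | rfl | rfl
    · exact Finset.mem_filter.mpr ⟨he1S, by simp⟩
    · exact Finset.mem_filter.mpr ⟨he2S, by simp⟩
    · exact Finset.mem_filter.mpr ⟨hfS, hvf⟩
  have hc3 : ({({v, a} : Finset V), {v, b}, f} : Finset (Finset V)).card = 3 :=
    Finset.card_eq_three.mpr ⟨_, _, _, h12, h1f, h2f, rfl⟩
  have hle := Finset.card_le_card hsub3
  rw [hc3] at hle
  rcases hembed v with h | h <;> omega

/-- let `K` be a triangulation (simplicial) of a compact connected closed
2-manifold, with unit edge weights (every edge in exactly two triangles, connected dual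
graph, connected vertex links), and let `S` be a proper embedded separating curve (each
vertex lies in 0 or 2 edges of S, and there is a 2-coloring `side` of the triangles such
that adjacent triangles get the same color iff their common edge is not in S).  Then
(a) S is a stable minimal surface iff its topological index is 0 (the disc complex 𝒟 is
empty), and (b) S is an unstable minimal surface iff its topological index is 1 (𝒟 is
nonempty and π₀(𝒟) is nontrivial, i.e. the graph of 𝒟 is not preconnected). -/
theorem stmt19 {V : Type} [DecidableEq V] [Fintype V]
    (K : Finset (Finset V))
    (hpure : ∀ T ∈ K, T.card = 3)
    (hpm : ∀ e : Finset V, e.card = 2 → (∃ T ∈ K, e ⊆ T) →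
      (K.filter (fun T => e ⊆ T)).card = 2)
    (hconn : ∀ s ∈ K, ∀ t ∈ K,
      Relation.ReflTransGen (fun a b => a ∈ K ∧ b ∈ K ∧ a ≠ b ∧ (a ∩ b).card = 2) s t)
    (hmanifold : ∀ v : V, ∀ s ∈ K, v ∈ s → ∀ t ∈ K, v ∈ t →
      Relation.ReflTransGen
        (fun a b => a ∈ K ∧ b ∈ K ∧ v ∈ a ∧ v ∈ b ∧ a ≠ b ∧ (a ∩ b).card = 2) s t)
    (S : Finset (Finset V))
    (hSsub : ∀ e ∈ S, e.card = 2 ∧ ∃ T ∈ K, e ⊆ T)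
    (hembed : ∀ v : V, (S.filter (fun e => v ∈ e)).card = 0 ∨
      (S.filter (fun e => v ∈ e)).card = 2)
    (side : Finset V → Bool)
    (hsep : ∀ s ∈ K, ∀ t ∈ K, s ≠ t → (s ∩ t).card = 2 →
      ((side s = side t) ↔ (s ∩ t) ∉ S)) :
    (StableMS K S ↔ IsEmpty {T : Finset V // IsShort2 K S T}) ∧
    (UnstableMS K S ↔
      (Nonempty {T : Finset V // IsShort2 K S T} ∧ ¬ (discGraph K S).Preconnected)) := by
  clear hpm hconn hmanifold
  constructor
  · -- part (a)
    constructor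
    · intro hst
      constructor
      rintro ⟨T, hTK, hne, hσ⟩
      exact hst T hTK hne (short_strict' hpure ⟨hTK, hne, hσ⟩).1
    · intro h T hTK hne hσ
      exact h.false ⟨T, hTK, hne, hσ.le⟩
  · -- part (b)
    constructor
    · -- UnstableMS → nonempty ∧ ¬Preconnected
      rintro ⟨𝒜, ℬ, hAne, hBne, hdisj, huni, hSedge, ⟨A₀, hA₀A, hA₀s⟩,
        ⟨B₀, hB₀B, hB₀s⟩, -, -, -, hpair⟩
      have hmemdisj : ∀ x, x ∈ 𝒜 → x ∈ ℬ → False := by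
        intro x hx hy
        have : x ∈ 𝒜 ∩ ℬ := Finset.mem_inter.mpr ⟨hx, hy⟩
        rw [hdisj] at this
        exact Finset.notMem_empty x this
      refine ⟨⟨⟨A₀, hA₀s⟩⟩, ?_⟩
      intro hpc
      obtain ⟨w⟩ := hpc ⟨A₀, hA₀s⟩ ⟨B₀, hB₀s⟩
      have step : ∀ x y : {T : Finset V // IsShort2 K S T},
          (discGraph K S).Adj x y → x.val ∈ 𝒜 → y.val ∈ 𝒜 := by
        intro x y hadj hx
        by_contra hy
        have hyB : y.val ∈ ℬ := by
          have : y.val ∈ 𝒜 ∪ ℬ := huni.symm ▸ y.2.1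
          rcases Finset.mem_union.mp this with h | h
          · exact absurd h hy
          · exact h
        have hxs := (short_strict' hpure x.2).1
        have hys := (short_strict' hpure y.2).1
        have hineq := hpair x.val hx y.val hyB x.2 hxs y.2 hys
        have hax : 1 ≤ |sigma2 S x.val| := by
          rw [abs_of_neg hxs]; omega
        have hay : 1 ≤ |sigma2 S y.val| := by
          rw [abs_of_neg hys]; omega
        have hcpos : 0 < (edgesOfT x.val ∩ edgesOfT y.val).card := by
          by_contra h
          push_neg at h
          have h0 : (edgesOfT x.val ∩ edgesOfT y.val).card = 0 := by omega
          rw [h0] at hineq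
          push_cast at hineq
          omega
        obtain ⟨e, he⟩ := Finset.card_pos.mp hcpos
        have heS : e ∈ S := hSedge x.val hx y.val hyB he
        have hemem := Finset.mem_inter.mp he
        exact hadj.2 e heS ⟨(mem_edges'.mp hemem.1).1, (mem_edges'.mp hemem.2).1⟩
      have main : ∀ (x y : {T : Finset V // IsShort2 K S T})
          (w : (discGraph K S).Walk x y), x.val ∈ 𝒜 → y.val ∈ 𝒜 := by
        intro x y w
        induction w with
        | nil => exact id
        | cons h p ih => exact fun ha => ih (step _ _ h ha)
      exact hmemdisj B₀ (main _ _ w hA₀A) hB₀B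
    · -- nonempty ∧ ¬Preconnected → UnstableMS
      rintro ⟨-, hnp⟩
      obtain ⟨u, hu⟩ := not_forall.mp hnp
      obtain ⟨v, huv⟩ := not_forall.mp hu
      -- same side, distinct shortening moves are adjacent
      have sameside : ∀ X Y : {T : Finset V // IsShort2 K S T}, X.val ≠ Y.val →
          side X.val = side Y.val → (discGraph K S).Adj X Y := by
        intro X Y hne hside
        refine ⟨fun h => hne (congrArg Subtype.val h), ?_⟩
        rintro e heS ⟨h1, h2⟩
        have he2 := (hSsub e heS).1
        obtain ⟨heq, hcard⟩ :=
          common_edge' (hpure _ X.2.1) (hpure _ Y.2.1) hne he2 h1 h2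
        have := (hsep X.val X.2.1 Y.val Y.2.1 hne hcard).mp hside
        exact this (heq ▸ heS)
      have hne_uv : u ≠ v := by
        rintro rfl
        exact huv (SimpleGraph.Reachable.refl u)
      have hvne : u.val ≠ v.val := fun h => hne_uv (Subtype.ext h)
      have hside : side u.val ≠ side v.val := fun h =>
        huv (sameside u v hvne h).reachable
      -- every move on u's side is reachable from u, etc.
      have reachu : ∀ X : {T : Finset V // IsShort2 K S T},
          side X.val = side u.val → (discGraph K S).Reachable u X := by
        intro X hX
        by_cases h : u.val = X.val
        · exact (Subtype.ext h) ▸ SimpleGraph.Reachable.refl u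
        · exact (sameside u X h hX.symm).reachable
      have reachv : ∀ Y : {T : Finset V // IsShort2 K S T},
          side Y.val = side v.val → (discGraph K S).Reachable v Y := by
        intro Y hY
        by_cases h : v.val = Y.val
        · exact (Subtype.ext h) ▸ SimpleGraph.Reachable.refl v
        · exact (sameside v Y h hY.symm).reachable
      -- cross pairs share an S-edge
      have cross : ∀ X Y : {T : Finset V // IsShort2 K S T},
          side X.val = side u.val → side Y.val = side v.val →
          X.val ≠ Y.val ∧ X.val ∩ Y.val ∈ S ∧ (X.val ∩ Y.val).card = 2 := by
        intro X Y hXu hYv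
        have hne : X.val ≠ Y.val := by
          intro h
          rw [h, hYv] at hXu
          exact hside hXu.symm
        have hnadj : ¬ (discGraph K S).Adj X Y := by
          intro hadj
          exact huv (((reachu X hXu).trans hadj.reachable).trans (reachv Y hYv).symm)
        have hnadj' : ¬ (X ≠ Y ∧ ∀ e ∈ S, ¬ (e ⊆ X.val ∧ e ⊆ Y.val)) := hnadj
        push_neg at hnadj'
        have hXYne : X ≠ Y := fun h => hne (congrArg Subtype.val h)
        obtain ⟨e, heS, h1, h2⟩ := hnadj' hXYne
        have he2 := (hSsub e heS).1
        obtain ⟨heq, hcard⟩ :=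
          common_edge' (hpure _ X.2.1) (hpure _ Y.2.1) hne he2 h1 h2
        exact ⟨hne, heq ▸ heS, hcard⟩
      -- every shortening move has exactly two edges in S
      have allk2 : ∀ X : {T : Finset V // IsShort2 K S T},
          (edgesOfT X.val ∩ S).card = 2 := by
        intro X
        have hk := (short_strict' hpure X.2).2
        have hle : (edgesOfT X.val ∩ S).card ≤ 3 :=
          le_trans (Finset.card_le_card Finset.inter_subset_left)
            (le_of_eq (edges_card' (hpure _ X.2.1)))
        by_contra hk2
        have hk3 : (edgesOfT X.val ∩ S).card = 3 := by omega
        have hall : edgesOfT X.val ⊆ S := by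
          have : edgesOfT X.val ∩ S = edgesOfT X.val :=
            Finset.eq_of_subset_of_card_le Finset.inter_subset_left
              (by rw [hk3, edges_card' (hpure _ X.2.1)])
          exact Finset.inter_eq_left.mp this
        have hcases : side X.val = side u.val ∨ side X.val = side v.val :=
          bool2' _ _ _ hside
        rcases hcases with h | h
        · obtain ⟨hne, heS, hcard⟩ := cross X v h rfl
          exact no_sigma3' hpure hembed X.2.1 hall v.2 hne heS hcard
        · obtain ⟨hne, heS, hcard⟩ := cross u X rfl h
          rw [Finset.inter_comm] at heS hcard
          exact no_sigma3' hpure hembed X.2.1 hall u.2 (Ne.symm hne) heS hcard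
      have absσ : ∀ X : {T : Finset V // IsShort2 K S T}, |sigma2 S X.val| = 1 := by
        intro X
        rw [sigma_eq' S (hpure _ X.2.1), allk2 X]
        decide
      -- the partition by side
      refine ⟨K.filter (fun T => side T = side u.val),
        K.filter (fun T => ¬ side T = side u.val), ⟨u.val, ?_⟩, ⟨v.val, ?_⟩,
        ?_, Finset.filter_union_filter_not_eq _ K, ?_, ?_, ?_, ?_, ?_, ?_, ?_⟩
      · exact Finset.mem_filter.mpr ⟨u.2.1, rfl⟩
      · exact Finset.mem_filter.mpr ⟨v.2.1, fun h => hside h.symm⟩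
      · rw [Finset.eq_empty_iff_forall_notMem]
        intro x hx
        have h1 := (Finset.mem_filter.mp (Finset.mem_inter.mp hx).1).2
        have h2 := (Finset.mem_filter.mp (Finset.mem_inter.mp hx).2).2
        exact h2 h1
      · -- common edges of opposite pairs lie in S
        intro A hA B hB e he
        have hAK := (Finset.mem_filter.mp hA).1
        have hAs := (Finset.mem_filter.mp hA).2
        have hBK := (Finset.mem_filter.mp hB).1
        have hBs := (Finset.mem_filter.mp hB).2
        have hne : A ≠ B := fun h => hBs (h ▸ hAs)
        have hemem := Finset.mem_inter.mp he
        have h1 := mem_edges'.mp hemem.1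
        have h2 := mem_edges'.mp hemem.2
        obtain ⟨heq, hcard⟩ :=
          common_edge' (hpure A hAK) (hpure B hBK) hne h1.2 h1.1 h2.1
        by_contra heS
        rw [heq] at heS
        exact hBs (((hsep A hAK B hBK hne hcard).mpr heS) ▸ hAs)
      · exact ⟨u.val, Finset.mem_filter.mpr ⟨u.2.1, rfl⟩, u.2⟩
      · exact ⟨v.val, Finset.mem_filter.mpr ⟨v.2.1, fun h => hside h.symm⟩, v.2⟩
      · exact Or.inl ⟨u.val, Finset.mem_filter.mpr ⟨u.2.1, rfl⟩, u.2,
          (short_strict' hpure u.2).1⟩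
      · -- balance 𝒜 → ℬ
        intro A hA hAs hAneg
        refine ⟨v.val, Finset.mem_filter.mpr ⟨v.2.1, fun h => hside h.symm⟩, v.2, ?_⟩
        obtain ⟨hne, heS, hcard⟩ := cross ⟨A, hAs⟩ v (Finset.mem_filter.mp hA).2 rfl
        have hmem : A ∩ v.val ∈ edgesOfT A ∩ edgesOfT v.val :=
          Finset.mem_inter.mpr ⟨mem_edges'.mpr ⟨Finset.inter_subset_left, hcard⟩,
            mem_edges'.mpr ⟨Finset.inter_subset_right, hcard⟩⟩
        have hpos : 0 < (edgesOfT A ∩ edgesOfT v.val).card :=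
          Finset.card_pos.mpr ⟨_, hmem⟩
        rw [absσ ⟨A, hAs⟩, absσ v]
        omega
      · -- balance ℬ → 𝒜
        intro B hB hBs hBneg
        refine ⟨u.val, Finset.mem_filter.mpr ⟨u.2.1, rfl⟩, u.2, ?_⟩
        have hBside : side B = side v.val :=
          bool3' _ _ _ hside (Finset.mem_filter.mp hB).2
        obtain ⟨hne, heS, hcard⟩ := cross u ⟨B, hBs⟩ rfl hBside
        have hmem : u.val ∩ B ∈ edgesOfT u.val ∩ edgesOfT B :=
          Finset.mem_inter.mpr ⟨mem_edges'.mpr ⟨Finset.inter_subset_left, hcard⟩,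
            mem_edges'.mpr ⟨Finset.inter_subset_right, hcard⟩⟩
        have hpos : 0 < (edgesOfT u.val ∩ edgesOfT B).card :=
          Finset.card_pos.mpr ⟨_, hmem⟩
        rw [absσ ⟨B, hBs⟩, absσ u]
        omega
      · -- pairwise
        intro A hA B hB hAs hAneg hBs hBneg
        have hBside : side B = side v.val :=
          bool3' _ _ _ hside (Finset.mem_filter.mp hB).2
        obtain ⟨hne, heS, hcard⟩ :=
          cross ⟨A, hAs⟩ ⟨B, hBs⟩ (Finset.mem_filter.mp hA).2 hBside
        have hmem : A ∩ B ∈ edgesOfT A ∩ edgesOfT B :=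
          Finset.mem_inter.mpr ⟨mem_edges'.mpr ⟨Finset.inter_subset_left, hcard⟩,
            mem_edges'.mpr ⟨Finset.inter_subset_right, hcard⟩⟩
        have hpos : 0 < (edgesOfT A ∩ edgesOfT B).card :=
          Finset.card_pos.mpr ⟨_, hmem⟩
        rw [absσ ⟨A, hAs⟩, absσ ⟨B, hBs⟩]
        omega
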